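/- Every finite-dimensional symplectic vector space admits a cloning process, i.e., for every symplectic vector space (V, ω) there exist b ∈ V, a symplectic vector space (W, σ) with dim W = dim V, r ∈ W, a function f : V → W, and a symplectic linear map φ : V × V × W → V × V × W with φ(x, b, r) = (x, x, f(x)) for all x ∈ V. -/

import Mathlib

/-- Every finite-dimensional symplectic vector space `(V, ω)` admits a cloning process:
there exist `b ∈ V`, a symplectic vector space `(W, σ)` with `dim W = dim V` (we may take
`W = V` itself, so the dimension condition holds automatically), `r ∈ W`, a function
`f : V → W`, and a symplectic linear map `φ : V × V × W → V × V × W` (for the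
direct-sum form `ω ⊕ ω ⊕ σ`) with `φ (x, b, r) = (x, x, f x)` for all `x ∈ V`. -/
theorem every_symplectic_vector_space_admits_cloning
    {V : Type*} [AddCommGroup V] [Module ℝ V] [FiniteDimensional ℝ V]
    (ω : V →ₗ[ℝ] V →ₗ[ℝ] ℝ)
    (halt : ∀ v : V, ω v v = 0)
    (hnd : ∀ v : V, (∀ w : V, ω v w = 0) → v = 0) :
    ∃ (σ : V →ₗ[ℝ] V →ₗ[ℝ] ℝ),
      (∀ w : V, σ w w = 0) ∧
      (∀ w : V, (∀ w' : V, σ w w' = 0) → w = 0) ∧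
      ∃ (b : V) (r : V) (f : V → V) (φ : (V × V × V) →ₗ[ℝ] (V × V × V)),
        (∀ u v : V × V × V,
          ω (φ u).1 (φ v).1 + ω (φ u).2.1 (φ v).2.1 + σ (φ u).2.2 (φ v).2.2
            = ω u.1 v.1 + ω u.2.1 v.2.1 + σ u.2.2 v.2.2) ∧
        (∀ x : V, φ (x, b, r) = (x, x, f x)) := by
  refine ⟨-ω, ?_, ?_, 0, 0, id, ?_⟩
  · intro w; simp [halt w]
  · intro w hw
    exact hnd w fun w' => by have := hw w'; simpa [neg_eq_zero] using this
  · -- projections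
    set π₁ : (V × V × V) →ₗ[ℝ] V := LinearMap.fst ℝ V (V × V) with hπ₁
    set π₂ : (V × V × V) →ₗ[ℝ] V :=
      (LinearMap.fst ℝ V V).comp (LinearMap.snd ℝ V (V × V)) with hπ₂
    set π₃ : (V × V × V) →ₗ[ℝ] V :=
      (LinearMap.snd ℝ V V).comp (LinearMap.snd ℝ V (V × V)) with hπ₃
    refine ⟨LinearMap.prod (π₁ + π₂ + π₃)
      (LinearMap.prod (π₁ - (1/2 : ℝ) • π₂ + (1/2 : ℝ) • π₃)
        (π₁ + (1/2 : ℝ) • π₂ + (3/2 : ℝ) • π₃)), ?_, ?_⟩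
    · rintro ⟨u₁, u₂, u₃⟩ ⟨v₁, v₂, v₃⟩
      simp only [LinearMap.prod_apply, Function.prod, LinearMap.add_apply, LinearMap.sub_apply,
        LinearMap.smul_apply, hπ₁, hπ₂, hπ₃, LinearMap.comp_apply, LinearMap.fst_apply,
        LinearMap.snd_apply, LinearMap.neg_apply, map_add, map_sub, map_smul, map_neg,
        LinearMap.add_apply, LinearMap.sub_apply, LinearMap.smul_apply, LinearMap.neg_apply,
        smul_eq_mul]
      ring
    · intro x
      simp [hπ₁, hπ₂, hπ₃]
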